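/- arXiv:2508.21392 — 2 statements merged into one kernel-verified Lean document; each statement's English description precedes it below -/
import Mathlib

section
/- Under the hyperbolic gnomonic projection h from H^d to the open unit ball of R^d, the pushforward of the hyperbolic volume measure is the measure with density ψ(x) = (1 − ‖x‖²)^{−(d+1)/2} with respect to Lebesgue measure on the open unit ball. -/
open Metric Set MeasureTheory
noncomputable section

/-- The hyperboloid model of hyperbolic `d`-space. -/
def Hyp (d : ℕ) : Set (EuclideanSpace ℝ (Fin (d + 1))) :=
  {x | ∑ i : Fin d, x i.castSucc ^ 2 - x (Fin.last d) ^ 2 = -1 ∧ 0 < x (Fin.last d)}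

/-- The vertical chart of the hyperboloid: `y ↦ (y, √(1+‖y‖²))`. -/
def hypChart (d : ℕ) (y : EuclideanSpace ℝ (Fin d)) : EuclideanSpace ℝ (Fin (d + 1)) :=
  WithLp.toLp 2 (fun i => Fin.lastCases (Real.sqrt (1 + ‖y‖ ^ 2)) (fun j => y j) i)

/-- The Riemannian volume measure of `H^d` in the hyperboloid model: in the vertical chart
`y ↦ (y, √(1+‖y‖²))` its density with respect to Lebesgue measure is `(1+‖y‖²)^{-1/2}`. -/
def hypVol (d : ℕ) : Measure (EuclideanSpace ℝ (Fin (d + 1))) :=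
  Measure.map (hypChart d)
    ((volume : Measure (EuclideanSpace ℝ (Fin d))).withDensity
      fun y => ENNReal.ofReal ((1 + ‖y‖ ^ 2) ^ (-(1 : ℝ) / 2)))

/-- The hyperbolic gnomonic projection `h(x) = (x_1/x_{d+1}, …, x_d/x_{d+1})`. -/
def hproj (d : ℕ) (x : EuclideanSpace ℝ (Fin (d + 1))) : EuclideanSpace ℝ (Fin d) :=
  WithLp.toLp 2 (fun i => x i.castSucc / x (Fin.last d))

namespace HypAux

variable {d : ℕ}

abbrev E (d : ℕ) := EuclideanSpace ℝ (Fin d)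

def gg (d : ℕ) (y : E d) : E d := (Real.sqrt (1 + ‖y‖ ^ 2))⁻¹ • y

def gg' (d : ℕ) (y : E d) : E d →L[ℝ] E d :=
  (Real.sqrt (1 + ‖y‖ ^ 2))⁻¹ • ContinuousLinearMap.id ℝ (E d)
    - ((Real.sqrt (1 + ‖y‖ ^ 2))⁻¹ ^ 3) • ((innerSL ℝ y).smulRight y)

lemma t_pos (y : E d) : (0:ℝ) < 1 + ‖y‖ ^ 2 := by positivity

lemma sqrt_t_pos (y : E d) : (0:ℝ) < Real.sqrt (1 + ‖y‖ ^ 2) :=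
  Real.sqrt_pos.2 (t_pos y)

lemma sq_sqrt_t (y : E d) : Real.sqrt (1 + ‖y‖ ^ 2) ^ 2 = 1 + ‖y‖ ^ 2 :=
  Real.sq_sqrt (t_pos y).le

lemma hasFDerivAt_gg (y : E d) : HasFDerivAt (gg d) (gg' d y) y := by
  have h1 : HasFDerivAt (fun y : E d => ‖y‖ ^ 2) (2 • (innerSL ℝ y)) y := by
    simpa using (hasFDerivAt_id y).norm_sq
  have h2 : HasFDerivAt (fun y : E d => (1:ℝ) + ‖y‖ ^ 2) (2 • (innerSL ℝ y)) y :=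
    by simpa using h1.const_add (1:ℝ)
  have h3 : HasFDerivAt (fun y : E d => Real.sqrt (1 + ‖y‖ ^ 2))
      ((1 / (2 * Real.sqrt (1 + ‖y‖ ^ 2))) • (2 • (innerSL ℝ y))) y :=
    (Real.hasDerivAt_sqrt (t_pos y).ne').comp_hasFDerivAt y h2
  have h4 : HasFDerivAt (fun y : E d => (Real.sqrt (1 + ‖y‖ ^ 2))⁻¹)
      ((-((Real.sqrt (1 + ‖y‖ ^ 2)) ^ 2)⁻¹) •
        ((1 / (2 * Real.sqrt (1 + ‖y‖ ^ 2))) • (2 • (innerSL ℝ y)))) y :=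
    (hasDerivAt_inv (sqrt_t_pos y).ne').comp_hasFDerivAt y h3
  have h5 := h4.smul (hasFDerivAt_id y)
  refine (h5 : HasFDerivAt (gg d) _ y).congr_fderiv ?_
  ext v i
  have hs := (sqrt_t_pos y).ne'
  simp [gg', ContinuousLinearMap.smulRight_apply, smul_smul, PiLp.smul_apply,
    smul_eq_mul, real_inner_comm y v]
  ring

end HypAux

namespace HypAux

lemma det_gg' (d : ℕ) (y : E d) :
    (gg' d y : E d →L[ℝ] E d).det = (Real.sqrt (1 + ‖y‖ ^ 2))⁻¹ ^ (d + 2) := by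
  set c : ℝ := (Real.sqrt (1 + ‖y‖ ^ 2))⁻¹ with hc
  have hb := PiLp.basisFun 2 ℝ (Fin d)
  rw [ContinuousLinearMap.det, ← LinearMap.det_toMatrix (PiLp.basisFun 2 ℝ (Fin d))]
  have hM : LinearMap.toMatrix (PiLp.basisFun 2 ℝ (Fin d)) (PiLp.basisFun 2 ℝ (Fin d))
      (gg' d y : E d →L[ℝ] E d) =
      c • (1 + Matrix.replicateCol (Fin 1) (fun i => -(c ^ 2) * y i) * Matrix.replicateRow (Fin 1) (fun j => y j)) := by
    ext i j
    simp [LinearMap.toMatrix_apply, gg', PiLp.basisFun_apply, PiLp.basisFun_repr,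
      ContinuousLinearMap.smulRight_apply, Matrix.one_apply, Matrix.mul_apply,
      EuclideanSpace.single_apply, Matrix.replicateCol_apply, Matrix.replicateRow_apply]
    have hinner : (inner ℝ y (EuclideanSpace.single j (1:ℝ)) : ℝ) = y j := by
      simp [EuclideanSpace.inner_single_right]
    rw [hc]
    by_cases h : i = j <;> simp [h, hinner] <;> ring
  erw [hM, Matrix.det_smul, Matrix.det_one_add_replicateCol_mul_replicateRow]
  have hsum : dotProduct (fun j => y j) (fun i => -(c ^ 2) * y i) = -(c ^ 2) * ‖y‖ ^ 2 := by
    have : ‖y‖ ^ 2 = ∑ i, y i * y i := by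
      rw [EuclideanSpace.norm_sq_eq]
      exact Finset.sum_congr rfl fun i _ => by rw [Real.norm_eq_abs, sq_abs, sq]
    simp only [dotProduct, this, Finset.mul_sum]
    apply Finset.sum_congr rfl
    intro x _
    ring
  rw [hsum]
  have hc2 : 1 + -(c ^ 2) * ‖y‖ ^ 2 = c ^ 2 := by
    rw [hc, inv_pow, sq_sqrt_t]
    field_simp
    ring
  rw [hc2, Fintype.card_fin]
  ring
end HypAux

namespace HypAux

def hh (d : ℕ) (x : E d) : E d := (Real.sqrt (1 - ‖x‖ ^ 2))⁻¹ • x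

lemma one_sub_norm_gg_sq (y : E d) : 1 - ‖gg d y‖ ^ 2 = (1 + ‖y‖ ^ 2)⁻¹ := by
  have h : ‖gg d y‖ ^ 2 = ‖y‖ ^ 2 / (1 + ‖y‖ ^ 2) := by
    rw [gg, norm_smul]
    rw [norm_inv, Real.norm_eq_abs, abs_of_pos (sqrt_t_pos y)]
    rw [mul_pow, inv_pow, sq_sqrt_t]
    ring
  rw [h]
  field_simp
  ring

lemma hh_gg (y : E d) : hh d (gg d y) = y := by
  rw [hh, one_sub_norm_gg_sq, gg, smul_smul]
  rw [Real.sqrt_inv]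
  have := (sqrt_t_pos y).ne'
  field_simp
  rw [one_smul]

lemma gg_mem_ball (y : E d) : gg d y ∈ ball (0 : E d) 1 := by
  rw [mem_ball_zero_iff, ← Real.sqrt_one]
  have h1 : ‖gg d y‖ = Real.sqrt (‖gg d y‖ ^ 2) := by
    rw [Real.sqrt_sq (norm_nonneg _)]
  rw [h1]
  apply Real.sqrt_lt_sqrt (by positivity)
  nlinarith [one_sub_norm_gg_sq y, inv_pos.2 (t_pos y)]

lemma gg_hh (x : E d) (hx : x ∈ ball (0 : E d) 1) : gg d (hh d x) = x := by
  have hx1 : ‖x‖ < 1 := mem_ball_zero_iff.1 hx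
  have hu : (0:ℝ) < 1 - ‖x‖ ^ 2 := by nlinarith [norm_nonneg x]
  have hsu : (0:ℝ) < Real.sqrt (1 - ‖x‖ ^ 2) := Real.sqrt_pos.2 hu
  have h2 : 1 + ‖hh d x‖ ^ 2 = (1 - ‖x‖ ^ 2)⁻¹ := by
    have h : ‖hh d x‖ ^ 2 = ‖x‖ ^ 2 / (1 - ‖x‖ ^ 2) := by
      rw [hh, norm_smul, norm_inv, Real.norm_eq_abs, abs_of_pos hsu]
      rw [mul_pow, inv_pow, Real.sq_sqrt hu.le]
      ring
    rw [h]
    field_simp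
    ring
  rw [gg, h2, hh, smul_smul, Real.sqrt_inv]
  field_simp
  rw [one_smul]

lemma range_gg (d : ℕ) : Set.range (gg d) = ball (0 : E d) 1 := by
  apply Set.Subset.antisymm
  · rintro _ ⟨y, rfl⟩; exact gg_mem_ball y
  · intro x hx; exact ⟨hh d x, gg_hh x hx⟩

lemma injective_gg (d : ℕ) : Function.Injective (gg d) :=
  Function.LeftInverse.injective hh_gg

end HypAux

namespace HypAux

lemma hproj_hypChart (d : ℕ) : hproj d ∘ hypChart d = gg d := by
  funext y
  ext i
  simp only [Function.comp_apply, hproj, hypChart, Fin.lastCases_castSucc,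
    Fin.lastCases_last, gg, PiLp.smul_apply, smul_eq_mul]
  rw [div_eq_inv_mul]

lemma measurable_hproj (d : ℕ) : Measurable (hproj d) :=
  (WithLp.measurable_toLp 2 _).comp (measurable_pi_lambda _ fun i =>
    ((measurable_pi_apply _).comp (WithLp.measurable_ofLp 2 _)).div
      ((measurable_pi_apply _).comp (WithLp.measurable_ofLp 2 _)))

lemma continuous_hypChart (d : ℕ) : Continuous (hypChart d) := by
  apply (PiLp.continuous_toLp 2 _).comp
  apply continuous_pi
  intro i
  induction i using Fin.lastCases with
  | last =>
      simp only [hypChart, Fin.lastCases_last]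
      exact (continuous_const.add (continuous_norm.pow 2)).sqrt
  | cast j =>
      simp only [hypChart, Fin.lastCases_castSucc]
      exact (continuous_apply _).comp (PiLp.continuous_ofLp 2 _)

lemma continuous_gg (d : ℕ) : Continuous (gg d) := by
  show Continuous fun y : E d => (Real.sqrt (1 + ‖y‖ ^ 2))⁻¹ • y
  refine Continuous.smul (f := fun y : E d => (Real.sqrt (1 + ‖y‖ ^ 2))⁻¹) (g := fun y => y) ?_ continuous_id
  exact ((continuous_const.add (continuous_norm.pow 2)).sqrt).inv₀ fun y => (sqrt_t_pos y).ne'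

lemma key (d : ℕ) (y : E d) :
    ENNReal.ofReal |(gg' d y : E d →L[ℝ] E d).det| *
      ENNReal.ofReal ((1 - ‖gg d y‖ ^ 2) ^ (-((d : ℝ) + 1) / 2)) =
    ENNReal.ofReal ((1 + ‖y‖ ^ 2) ^ (-(1 : ℝ) / 2)) := by
  have ht := t_pos y
  set t : ℝ := 1 + ‖y‖ ^ 2 with hT
  rw [det_gg', one_sub_norm_gg_sq]
  have h1 : (Real.sqrt t)⁻¹ ^ (d + 2) = t ^ ((-((d : ℝ) + 2)) / 2) := by
    rw [Real.sqrt_eq_rpow, ← Real.rpow_neg ht.le, ← Real.rpow_natCast (t ^ (-(1/2:ℝ))) (d+2),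
      ← Real.rpow_mul ht.le]
    push_cast
    ring_nf
  have h2 : (t⁻¹ : ℝ) ^ (-((d : ℝ) + 1) / 2) = t ^ (((d : ℝ) + 1) / 2) := by
    rw [← Real.rpow_neg_one t, ← Real.rpow_mul ht.le]
    ring_nf
  rw [h1, h2, abs_of_nonneg (Real.rpow_nonneg ht.le _),
    ← ENNReal.ofReal_mul (Real.rpow_nonneg ht.le _), ← Real.rpow_add ht]
  congr 1
  ring_nf

end HypAux

namespace HypAux

lemma map_gg (d : ℕ) :
    Measure.map (gg d)
      ((volume : Measure (E d)).withDensity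
        fun y => ENNReal.ofReal ((1 + ‖y‖ ^ 2) ^ (-(1 : ℝ) / 2))) =
    ((volume : Measure (E d)).restrict (ball (0 : E d) 1)).withDensity
      (fun y => ENNReal.ofReal ((1 - ‖y‖ ^ 2) ^ (-((d : ℝ) + 1) / 2))) := by
  ext A hA
  rw [Measure.map_apply (continuous_gg d).measurable hA,
    withDensity_apply _ (hA.preimage (continuous_gg d).measurable),
    withDensity_apply _ hA, Measure.restrict_restrict hA]
  have himg : gg d '' (gg d ⁻¹' A) = A ∩ ball 0 1 := by
    rw [Set.image_preimage_eq_inter_range, range_gg]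
  calc ∫⁻ y in gg d ⁻¹' A, ENNReal.ofReal ((1 + ‖y‖ ^ 2) ^ (-(1:ℝ)/2)) ∂volume
      = ∫⁻ y in gg d ⁻¹' A, ENNReal.ofReal |(gg' d y : E d →L[ℝ] E d).det| *
          ENNReal.ofReal ((1 - ‖gg d y‖ ^ 2) ^ (-((d : ℝ) + 1) / 2)) ∂volume := by
        exact lintegral_congr fun y => (key d y).symm
    _ = ∫⁻ x in gg d '' (gg d ⁻¹' A),
          ENNReal.ofReal ((1 - ‖x‖ ^ 2) ^ (-((d : ℝ) + 1) / 2)) ∂volume := by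
        rw [lintegral_image_eq_lintegral_abs_det_fderiv_mul volume
          (hA.preimage (continuous_gg d).measurable)
          (fun x _ => (hasFDerivAt_gg x).hasFDerivWithinAt)
          ((injective_gg d).injOn) _]
    _ = _ := by rw [himg]

end HypAux


/-- Under the hyperbolic gnomonic projection, the pushforward of the hyperbolic volume
measure is the measure with density `ψ(x) = (1 − ‖x‖²)^{−(d+1)/2}` with respect to Lebesgue
measure on the open unit ball. -/
theorem hyperbolic_gnomonic_pushforward (d : ℕ) :
    Measure.map (hproj d) (hypVol d) =
      ((volume : Measure (EuclideanSpace ℝ (Fin d))).restrict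
          (ball (0 : EuclideanSpace ℝ (Fin d)) 1)).withDensity
        (fun y => ENNReal.ofReal ((1 - ‖y‖ ^ 2) ^ (-((d : ℝ) + 1) / 2))) := by
  rw [hypVol, Measure.map_map (HypAux.measurable_hproj d) (HypAux.continuous_hypChart d).measurable,
    HypAux.hproj_hypChart, HypAux.map_gg]
end
end

section
/- Let x be a point in the interior of the convex hull of points y_1, …, y_n in R^d (or in a convex body of S^d contained in an open hemisphere). Partition a neighborhood of x by the 2^d closed orthants of a coordinate system centered at x. If every one of the 2^d orthants contains at least one of the points y_i, then x lies in the convex hull of the chosen 2^d points; contrapositively, if x is not in the convex hull of y_1,…,y_n, then at least one orthant relative to x contains no y_i. -/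
open Set
noncomputable section

/-- The closed orthant at `x` with sign pattern `ε` (`true` encoding `+1`, `false`
encoding `−1`): `{y : ε_j (y − x)_j ≥ 0 for all j}`. -/
def orthant {d : ℕ} (x : EuclideanSpace ℝ (Fin d)) (ε : Fin d → Bool) :
    Set (EuclideanSpace ℝ (Fin d)) :=
  {y | ∀ j : Fin d, if ε j then x j ≤ y j else y j ≤ x j}

lemma euclidean_sum_single {d : ℕ} (w : EuclideanSpace ℝ (Fin d)) :
    w = ∑ j : Fin d, (w j) • EuclideanSpace.single j (1 : ℝ) := by
  ext k
  rw [WithLp.ofLp_sum, Finset.sum_apply]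
  rw [Finset.sum_eq_single k]
  · simp
  · intro j _ hj
    simp [EuclideanSpace.single_apply, Ne.symm hj]
  · simp

/-- If `x` is not in a closed convex set `s`, some orthant at `x` is disjoint from `s`. -/
lemma orthant_separation {d : ℕ} (x : EuclideanSpace ℝ (Fin d))
    (s : Set (EuclideanSpace ℝ (Fin d))) (hc : Convex ℝ s) (hcl : IsClosed s)
    (hx : x ∉ s) : ∃ ε : Fin d → Bool, ∀ z ∈ orthant x ε, z ∉ s := by
  obtain ⟨f, u, hfx, hfs⟩ := geometric_hahn_banach_point_closed hc hcl hx
  refine ⟨fun j => decide (f (EuclideanSpace.single j (1 : ℝ)) ≤ 0), fun z hz hzs => ?_⟩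
  have key : f z ≤ f x := by
    have hzx : f z - f x = ∑ j : Fin d, (z j - x j) * f (EuclideanSpace.single j (1 : ℝ)) := by
      rw [← map_sub]
      conv_lhs => rw [euclidean_sum_single (z - x)]
      rw [map_sum]
      refine Finset.sum_congr rfl fun j _ => ?_
      simp [map_smul]
    have hterm : ∀ j : Fin d, (z j - x j) * f (EuclideanSpace.single j (1 : ℝ)) ≤ 0 := by
      intro j
      have hj := hz j
      by_cases h : f (EuclideanSpace.single j (1 : ℝ)) ≤ 0
      · simp [h] at hj
        exact mul_nonpos_of_nonneg_of_nonpos (by linarith) h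
      · simp [h] at hj
        exact mul_nonpos_of_nonpos_of_nonneg (by linarith) (le_of_not_ge h)
    have : f z - f x ≤ 0 := hzx ▸ Finset.sum_nonpos fun j _ => hterm j
    linarith
  have := hfs z hzs
  linarith

/-- If `x` lies in the interior of the convex hull of `y_1,…,y_n` and each of the `2^d`
orthants at `x` contains a chosen point `y_{p(ε)}`, then `x` lies in the convex hull of the
`2^d` chosen points; contrapositively, if `x` is not in the convex hull of `y_1,…,y_n`,
then some orthant at `x` contains none of the `y_i`. -/
theorem orthant_pigeonhole (d n : ℕ) (x : EuclideanSpace ℝ (Fin d))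
    (y : Fin n → EuclideanSpace ℝ (Fin d)) :
    ((x ∈ interior (convexHull ℝ (Set.range y))) →
      ∀ p : (Fin d → Bool) → Fin n, (∀ ε, y (p ε) ∈ orthant x ε) →
        x ∈ convexHull ℝ (Set.range (y ∘ p))) ∧
    (x ∉ convexHull ℝ (Set.range y) → ∃ ε : Fin d → Bool, ∀ i, y i ∉ orthant x ε) := by
  constructor
  · intro _ p hp
    by_contra hx
    obtain ⟨ε, hε⟩ := orthant_separation x (convexHull ℝ (Set.range (y ∘ p)))
      (convex_convexHull ℝ _) ((Set.finite_range _).isClosed_convexHull ℝ) hx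
    exact hε (y (p ε)) (hp ε)
      (subset_convexHull ℝ _ ⟨ε, rfl⟩)
  · intro hx
    obtain ⟨ε, hε⟩ := orthant_separation x (convexHull ℝ (Set.range y))
      (convex_convexHull ℝ _) ((Set.finite_range _).isClosed_convexHull ℝ) hx
    exact ⟨ε, fun i hi => hε (y i) hi (subset_convexHull ℝ _ ⟨i, rfl⟩)⟩
end
end
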